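/- Let T be a rigid object in C, let f : X → Y be a map in C, and complete f to a triangle Σ⁻¹Z →h X →f Y →g Z. Then: (a) h factors through an object of ΣT^⊥ if and only if Hom_C(T, f) : Hom_C(T, X) → Hom_C(T, Y) is a monomorphism of End_C(T)^op-modules; (b) g factors through an object of ΣT^⊥ if and only if Hom_C(T, f) is an epimorphism of End_C(T)^op-modules. -/

import Mathlib

/-!
Common setup: `C` is a Hom-finite, Krull-Schmidt (= idempotent complete, given
Hom-finiteness over a field), `k`-linear triangulated category with suspension
functor `Σ = shiftFunctor C (1 : ℤ)`, and `T` is a rigid object of `C`.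
-/

noncomputable section

open CategoryTheory CategoryTheory.Limits CategoryTheory.Pretriangulated

universe v u

namespace PaperBM

/-- The left action of `End X` on `unop X ⟶ Y` for `X : Cᵒᵖ` (as in the older Mathlib's
`Preadditive.moduleEndLeft`), by `r • f = r.unop ≫ f`. -/
instance mulActionEndLeftOp {C : Type u} [Category.{v} C] {X : Cᵒᵖ} {Y : C} :
    MulAction (End X) (Opposite.unop X ⟶ Y) where
  smul r f := r.unop ≫ f
  one_smul := Category.id_comp
  mul_smul _ _ _ := Category.assoc _ _ _

instance moduleEndLeftOp {C : Type u} [Category.{v} C] [Preadditive C] {X : Cᵒᵖ} {Y : C} :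
    Module (End X) (Opposite.unop X ⟶ Y) where
  smul_add _ _ _ := Preadditive.comp_add _ _ _ _ _ _
  smul_zero _ := Limits.comp_zero
  add_smul _ _ _ := Preadditive.add_comp _ _ _ _ _ _
  zero_smul _ := Limits.zero_comp

/-- The older Mathlib's `preadditiveCoyonedaObj` (for `X : Cᵒᵖ`, valued in `End X`-modules). -/
def preadditiveCoyonedaObjOld {C : Type u} [Category.{v} C] [Preadditive C] (X : Cᵒᵖ) :
    C ⥤ ModuleCat.{v} (End X) where
  obj Y := ModuleCat.of _ (Opposite.unop X ⟶ Y)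
  map f := ModuleCat.ofHom
    { toFun := fun g => g ≫ f
      map_add' := fun _ _ => Preadditive.add_comp _ _ _ _ _ _
      map_smul' := fun _ _ => Category.assoc _ _ _ }

variable {C : Type u} [Category.{v} C] [Preadditive C] [HasZeroObject C]
  [HasShift C ℤ] [∀ n : ℤ, (shiftFunctor C n).Additive] [Pretriangulated C]
  [HasFiniteBiproducts C]

/-- `X` lies in `add T`: it is a direct summand of a finite direct sum of copies of `T`. -/
def memAdd (T X : C) : Prop :=
  ∃ (n : ℕ) (s : X ⟶ ⨁ (fun _ : Fin n => T)) (r : (⨁ fun _ : Fin n => T) ⟶ X), s ≫ r = 𝟙 X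

/-- `T` is rigid: `Hom_C(T, ΣT) = 0`. -/
def IsRigidObj (T : C) : Prop := ∀ f : T ⟶ (shiftFunctor C (1 : ℤ)).obj T, f = 0

/-- `Y ∈ T^⊥`, i.e. `Hom_C(X, ΣY) = 0` for all `X ∈ add T`. -/
def memTperp (T Y : C) : Prop :=
  ∀ (X : C), memAdd T X → ∀ f : X ⟶ (shiftFunctor C (1 : ℤ)).obj Y, f = 0

/-- `Y ∈ ⊥T`, i.e. `Hom_C(Y, ΣX) = 0` for all `X ∈ add T`. -/
def memPerpT (T Y : C) : Prop :=
  ∀ (X : C), memAdd T X → ∀ f : Y ⟶ (shiftFunctor C (1 : ℤ)).obj X, f = 0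

/-- `Y ∈ ΣT^⊥`, the image of `T^⊥` under the suspension `Σ`. -/
def memSigmaTperp (T Y : C) : Prop :=
  ∃ Z : C, memTperp T Z ∧ Nonempty (Y ≅ (shiftFunctor C (1 : ℤ)).obj Z)

/-- The map `f` factors through an object belonging to the class `P` of objects. -/
def FactorsThru (P : C → Prop) {A B : C} (f : A ⟶ B) : Prop :=
  ∃ (Z : C) (g : A ⟶ Z) (h : Z ⟶ B), P Z ∧ g ≫ h = f

/-- The class `S̃` of maps `f : X ⟶ Y` such that in a completion
`Σ⁻¹Z →h X →f Y →g Z` of `f` to a triangle (where `A` plays the role of `Σ⁻¹Z`,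
so that `Z = ΣA`), both `g` and `h` factor through an object of `ΣT^⊥`. -/
def Stilde (T : C) : MorphismProperty C := fun X Y f =>
  ∃ (A : C) (h : A ⟶ X) (g : Y ⟶ (shiftFunctor C (1 : ℤ)).obj A),
    (Triangle.mk h f g ∈ distTriang C) ∧
    FactorsThru (memSigmaTperp T) g ∧ FactorsThru (memSigmaTperp T) h

/-- The class `S` of maps `f : X ⟶ Y` such that in a completion
`Σ⁻¹Z →h X →f Y →g Z` of `f` to a triangle (where `A` plays the role of `Σ⁻¹Z`,
so that `Z = ΣA`), `g` factors through an object of `ΣT^⊥` and `Σ⁻¹Z ∈ ΣT^⊥`. -/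
def Sclass (T : C) : MorphismProperty C := fun X Y f =>
  ∃ (A : C) (h : A ⟶ X) (g : Y ⟶ (shiftFunctor C (1 : ℤ)).obj A),
    (Triangle.mk h f g ∈ distTriang C) ∧
    FactorsThru (memSigmaTperp T) g ∧ memSigmaTperp T A

/-- `X ∈ C(T)`: there is a triangle `T₁ → T₀ → X → ΣT₁` with `T₀, T₁ ∈ add T`. -/
def memCT (T X : C) : Prop :=
  ∃ (T₁ T₀ : C) (a : T₁ ⟶ T₀) (b : T₀ ⟶ X) (c : X ⟶ (shiftFunctor C (1 : ℤ)).obj T₁),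
    memAdd T T₁ ∧ memAdd T T₀ ∧ (Triangle.mk a b c ∈ distTriang C)

/-- `f : X₀ ⟶ Y` is a right `P`-approximation of `Y`. -/
def IsRightApprox (P : C → Prop) {X₀ Y : C} (f : X₀ ⟶ Y) : Prop :=
  P X₀ ∧ ∀ (W : C), P W → ∀ g : W ⟶ Y, ∃ g' : W ⟶ X₀, g' ≫ f = g

/-- `f : Y ⟶ X₀` is a left `P`-approximation of `Y`. -/
def IsLeftApprox (P : C → Prop) {Y X₀ : C} (f : Y ⟶ X₀) : Prop :=
  P X₀ ∧ ∀ (W : C), P W → ∀ g : Y ⟶ W, ∃ g' : X₀ ⟶ W, f ≫ g' = g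

/-- The map `f : X₀ ⟶ Y` is right minimal. -/
def IsRightMinimal {X₀ Y : C} (f : X₀ ⟶ Y) : Prop :=
  ∀ g : X₀ ⟶ X₀, g ≫ f = f → IsIso g

/-- The functor `H = Hom_C(T, -) : C ⥤ Mod End_C(T)ᵒᵖ`.  Here, with Mathlib's
conventions, the endomorphism ring `End (Opposite.op T)` of `T` viewed in `Cᵒᵖ` plays
the role of `End_C(T)ᵒᵖ`, so that each `Hom_C(T, X)` is a left module over it. -/
abbrev homFunctor (T : C) : C ⥤ ModuleCat.{v} (End (Opposite.op T)) :=
  preadditiveCoyonedaObjOld (Opposite.op T)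

/-- The predicate on `End_C(T)ᵒᵖ`-modules of being finite-dimensional (equivalently,
since `End_C(T)` is a finite-dimensional algebra, finitely generated). -/
abbrev isFinDim (T : C) : ModuleCat.{v} (End (Opposite.op T)) → Prop :=
  fun M => Module.Finite (End (Opposite.op T)) M

/-- The category `mod End_C(T)ᵒᵖ` of finite-dimensional `End_C(T)ᵒᵖ`-modules. -/
abbrev fdMod (T : C) := ObjectProperty.FullSubcategory (isFinDim T)

/-- The ideal relation on `C(T)` of maps factoring through an object of `ΣT^⊥`. -/
def homRelCT (T : C) : HomRel (ObjectProperty.FullSubcategory (memCT T)) :=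
  fun A B f g => FactorsThru (memSigmaTperp T) (((f - g).hom : A.obj ⟶ B.obj))

/-- The ideal relation on `C(T)` of maps factoring through an object of `add ΣT`. -/
def homRelCTadd (T : C) : HomRel (ObjectProperty.FullSubcategory (memCT T)) :=
  fun A B f g => FactorsThru (memAdd ((shiftFunctor C (1 : ℤ)).obj T)) (((f - g).hom : A.obj ⟶ B.obj))

/-- The ideal relation on `C` of maps factoring through an object of `add ΣT`. -/
def homRelAdd (T : C) : HomRel C :=
  fun A B f g => FactorsThru (memAdd ((shiftFunctor C (1 : ℤ)).obj T)) (f - g)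

end PaperBM

open PaperBM

namespace StmtAux
open PaperBM
variable {C : Type u} [Category.{v} C] [Preadditive C] [HasZeroObject C]
  [HasShift C ℤ] [∀ n : ℤ, (shiftFunctor C n).Additive] [Pretriangulated C]
  [HasFiniteBiproducts C]

lemma homFunctor_map_apply (T : C) {X Y : C} (f : X ⟶ Y) (φ : T ⟶ X) :
    ((homFunctor T).map f) φ = φ ≫ f := rfl

lemma memAdd_self (T : C) : memAdd T T := by
  refine ⟨1, biproduct.lift (fun _ => 𝟙 T), biproduct.desc (fun _ => 𝟙 T), ?_⟩
  simp [biproduct.lift_desc]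

lemma memAdd_biproduct (T : C) (n : ℕ) : memAdd T (⨁ fun _ : Fin n => T) :=
  ⟨n, 𝟙 _, 𝟙 _, by simp⟩

lemma zero_of_memAdd_src {T B : C} (hz : ∀ v : T ⟶ B, v = 0) {W : C}
    (hW : memAdd T W) (u : W ⟶ B) : u = 0 := by
  obtain ⟨n, s, r, hsr⟩ := hW
  have hr : r ≫ u = 0 := by
    apply biproduct.hom_ext'
    intro i
    have := hz (biproduct.ι (fun _ : Fin n => T) i ≫ r ≫ u)
    simpa using this
  calc u = (s ≫ r) ≫ u := by rw [hsr, Category.id_comp]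
  _ = s ≫ (r ≫ u) := Category.assoc _ _ _
  _ = 0 := by rw [hr, comp_zero]

lemma zero_into_shift_add {T : C} (hT : IsRigidObj T) {W W' : C}
    (hW : memAdd T W) (hW' : memAdd T W') (u : W ⟶ (shiftFunctor C (1 : ℤ)).obj W') :
    u = 0 := by
  apply zero_of_memAdd_src _ hW
  intro v
  obtain ⟨n, s, r, hsr⟩ := hW'
  have h1 : (𝟙 ((shiftFunctor C (1 : ℤ)).obj W') : _) =
      (shiftFunctor C (1 : ℤ)).map s ≫ (shiftFunctor C (1 : ℤ)).map r := by
    rw [← Functor.map_comp, hsr]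
    exact ((shiftFunctor C (1 : ℤ)).map_id W').symm
  have hvs : v ≫ (shiftFunctor C (1 : ℤ)).map s = 0 := by
    set w := v ≫ (shiftFunctor C (1 : ℤ)).map s with hw
    have htot : (𝟙 ((shiftFunctor C (1 : ℤ)).obj (⨁ fun _ : Fin n => T)) : _) =
        ∑ j : Fin n, (shiftFunctor C (1 : ℤ)).map (biproduct.π (fun _ : Fin n => T) j) ≫
          (shiftFunctor C (1 : ℤ)).map (biproduct.ι (fun _ : Fin n => T) j) := by
      calc (𝟙 ((shiftFunctor C (1 : ℤ)).obj (⨁ fun _ : Fin n => T)) : _)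
          = (shiftFunctor C (1 : ℤ)).map (𝟙 _) := ((shiftFunctor C (1 : ℤ)).map_id _).symm
      _ = (shiftFunctor C (1 : ℤ)).map (∑ j : Fin n,
            biproduct.π (fun _ : Fin n => T) j ≫ biproduct.ι (fun _ : Fin n => T) j) := by
          rw [biproduct.total]
      _ = ∑ j : Fin n, (shiftFunctor C (1 : ℤ)).map
            (biproduct.π (fun _ : Fin n => T) j ≫ biproduct.ι (fun _ : Fin n => T) j) :=
          Functor.map_sum _ _ _
      _ = _ := Finset.sum_congr rfl (fun j _ => Functor.map_comp _ _ _)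
    calc w = w ≫ 𝟙 _ := (Category.comp_id w).symm
    _ = ∑ j : Fin n, w ≫ ((shiftFunctor C (1 : ℤ)).map (biproduct.π (fun _ : Fin n => T) j) ≫
          (shiftFunctor C (1 : ℤ)).map (biproduct.ι (fun _ : Fin n => T) j)) := by
        rw [htot, Preadditive.comp_sum]
    _ = 0 := Finset.sum_eq_zero (fun j _ => by
        rw [← Category.assoc, hT (w ≫ (shiftFunctor C (1 : ℤ)).map
          (biproduct.π (fun _ : Fin n => T) j)), zero_comp])
  calc v = v ≫ 𝟙 _ := (Category.comp_id v).symm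
  _ = (v ≫ (shiftFunctor C (1 : ℤ)).map s) ≫ (shiftFunctor C (1 : ℤ)).map r := by
      rw [h1, ← Category.assoc]
  _ = 0 := by rw [hvs, zero_comp]

lemma memSigmaTperp_of_hom_zero {T B : C}
    (hz : ∀ (W : C), memAdd T W → ∀ u : W ⟶ B, u = 0) : memSigmaTperp T B := by
  refine ⟨(shiftFunctor C (-1 : ℤ)).obj B, ?_, ⟨?_⟩⟩
  · intro W hW u
    have e := (shiftFunctorCompIsoId C (-1 : ℤ) (1 : ℤ) (by ring)).app B
    have h0 : u ≫ e.hom = 0 := hz W hW _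
    calc u = (u ≫ e.hom) ≫ e.inv := by simp
    _ = 0 := by rw [h0, zero_comp]
  · exact ((shiftFunctorCompIsoId C (-1 : ℤ) (1 : ℤ) (by ring)).app B).symm

lemma hom_zero_of_memSigmaTperp {T W : C} (hW : memSigmaTperp T W) (v : T ⟶ W) :
    v = 0 := by
  obtain ⟨Z, hZ, ⟨e⟩⟩ := hW
  have h0 : v ≫ e.hom = 0 := hZ T (memAdd_self T) _
  calc v = (v ≫ e.hom) ≫ e.inv := by simp
  _ = 0 := by rw [h0, zero_comp]

variable {k : Type*} [Field k] [CategoryTheory.Linear k C]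
  [∀ X Y : C, FiniteDimensional k (X ⟶ Y)]

lemma exists_approx (k : Type*) [Field k] [CategoryTheory.Linear k C]
    [∀ X Y : C, FiniteDimensional k (X ⟶ Y)] (T Z : C) :
    ∃ (n : ℕ) (α : (⨁ fun _ : Fin n => T) ⟶ Z),
      ∀ φ : T ⟶ Z, ∃ ψ : T ⟶ (⨁ fun _ : Fin n => T), ψ ≫ α = φ := by
  set n := Module.finrank k (T ⟶ Z)
  set b := Module.finBasis k (T ⟶ Z)
  refine ⟨n, biproduct.desc (fun i => b i), fun φ => ?_⟩
  refine ⟨biproduct.lift (fun i => (b.repr φ i) • 𝟙 T), ?_⟩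
  rw [biproduct.lift_desc]
  simp only [Linear.smul_comp, Category.id_comp]
  exact b.sum_repr φ

lemma factors_of_comp_zero {T : C} (hT : IsRigidObj T) {Z V : C} {n : ℕ}
    (α : (⨁ fun _ : Fin n => T) ⟶ Z)
    (happrox : ∀ φ : T ⟶ Z, ∃ ψ, ψ ≫ α = φ)
    (u : Z ⟶ V) (hu : α ≫ u = 0) : FactorsThru (memSigmaTperp T) u := by
  obtain ⟨B, β, γ, hB⟩ := Pretriangulated.distinguished_cocone_triangle α
  have hBperp : memSigmaTperp T B := by
    apply memSigmaTperp_of_hom_zero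
    apply zero_of_memAdd_src
    intro v
    have hvγ : v ≫ γ = 0 := zero_into_shift_add hT (memAdd_self T) (memAdd_biproduct T n) _
    obtain ⟨(ρ : T ⟶ Z), hρ⟩ := Triangle.coyoneda_exact₃ _ hB v hvγ
    change v = ρ ≫ β at hρ
    obtain ⟨σ, hσ⟩ := happrox ρ
    have hαβ : α ≫ β = 0 := comp_distTriang_mor_zero₁₂ _ hB
    rw [hρ, ← hσ, Category.assoc, hαβ, comp_zero]
  obtain ⟨u', hu'⟩ := Triangle.yoneda_exact₂ _ hB u hu
  exact ⟨B, β, u', hBperp, hu'.symm⟩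

end StmtAux

/-- Given a completion `Σ⁻¹Z →h X →f Y →g Z` of `f` to a triangle (`A` plays the role
of `Σ⁻¹Z`): (a) `h` factors through an object of `ΣT^⊥` iff `Hom_C(T, f)` is a
monomorphism of `End_C(T)ᵒᵖ`-modules; (b) `g` factors through an object of `ΣT^⊥`
iff `Hom_C(T, f)` is an epimorphism of `End_C(T)ᵒᵖ`-modules. -/
theorem statement_7 {C : Type u} [Category.{v} C] [Preadditive C] [HasZeroObject C]
    [HasShift C ℤ] [∀ n : ℤ, (shiftFunctor C n).Additive] [Pretriangulated C]
    [HasFiniteBiproducts C]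
    {k : Type*} [Field k] [CategoryTheory.Linear k C]
    [∀ X Y : C, FiniteDimensional k (X ⟶ Y)] [IsIdempotentComplete C]
    (T : C) (hT : IsRigidObj T) {X Y : C} (f : X ⟶ Y)
    (A : C) (h : A ⟶ X) (g : Y ⟶ (shiftFunctor C (1 : ℤ)).obj A)
    (htri : Triangle.mk h f g ∈ distTriang C) :
    (FactorsThru (memSigmaTperp T) h ↔ Mono ((homFunctor T).map f)) ∧
    (FactorsThru (memSigmaTperp T) g ↔ Epi ((homFunctor T).map f)) := by
  constructor
  · constructor
    · rintro ⟨W, u, v, hW, huv⟩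
      rw [ModuleCat.mono_iff_injective]
      intro (a : T ⟶ X) (b : T ⟶ X) hab
      have hab' : (a : T ⟶ X) ≫ f = (b : T ⟶ X) ≫ f := hab
      have hz : ((a : T ⟶ X) - b) ≫ f = 0 := by
        rw [Preadditive.sub_comp, hab', sub_self]
      obtain ⟨(ψ : T ⟶ A), hψ⟩ := Pretriangulated.Triangle.coyoneda_exact₂ _ htri ((a : T ⟶ X) - b) hz
      change a - b = ψ ≫ h at hψ
      have hψu : ψ ≫ u = 0 := StmtAux.hom_zero_of_memSigmaTperp hW _
      have hsub : (a : T ⟶ X) - b = 0 := by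
        rw [hψ, ← huv, ← Category.assoc, hψu, zero_comp]
      exact sub_eq_zero.mp hsub
    · intro hMono
      rw [ModuleCat.mono_iff_injective] at hMono
      obtain ⟨n, α, happrox⟩ := StmtAux.exists_approx k T A
      apply StmtAux.factors_of_comp_zero hT α happrox h
      apply biproduct.hom_ext'
      intro i
      have hhf : h ≫ f = 0 := Pretriangulated.comp_distTriang_mor_zero₁₂ _ htri
      have h1 : (biproduct.ι (fun _ : Fin n => T) i ≫ α ≫ h) ≫ f = 0 := by
        rw [Category.assoc, Category.assoc, hhf, comp_zero, comp_zero]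
      have h2 : ((homFunctor T).map f) (biproduct.ι (fun _ : Fin n => T) i ≫ α ≫ h) =
          ((homFunctor T).map f) 0 := by
        rw [map_zero]; exact h1
      have h3 := hMono h2
      rw [comp_zero]
      exact h3
  · constructor
    · rintro ⟨W, u, v, hW, huv⟩
      rw [ModuleCat.epi_iff_surjective]
      intro (ψ : T ⟶ Y)
      have hψu : (ψ : T ⟶ Y) ≫ u = 0 := StmtAux.hom_zero_of_memSigmaTperp hW _
      have hψg : (ψ : T ⟶ Y) ≫ g = 0 := by
        rw [← huv, ← Category.assoc, hψu, zero_comp]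
      obtain ⟨(φ : T ⟶ X), hφ⟩ := Pretriangulated.Triangle.coyoneda_exact₃ _ htri ψ hψg
      change ψ = φ ≫ f at hφ
      exact ⟨φ, hφ.symm⟩
    · intro hEpi
      rw [ModuleCat.epi_iff_surjective] at hEpi
      obtain ⟨n, α, happrox⟩ := StmtAux.exists_approx k T Y
      apply StmtAux.factors_of_comp_zero hT α happrox g
      apply biproduct.hom_ext'
      intro i
      obtain ⟨(φ : T ⟶ X), hφ⟩ := hEpi (biproduct.ι (fun _ : Fin n => T) i ≫ α)
      have hφ' : (φ : T ⟶ X) ≫ f = biproduct.ι (fun _ : Fin n => T) i ≫ α := hφ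
      have hfg : f ≫ g = 0 := Pretriangulated.comp_distTriang_mor_zero₂₃ _ htri
      rw [comp_zero, ← Category.assoc, ← hφ', Category.assoc, hfg, comp_zero]
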